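/- (Representation formula for the linearized conformal factor, §3.4, eq. (3.2).) Suppose [1, r] ⊆ I. Then under the linearized first variation and Raychaudhuri equations, φ̇(r) = r·φ̇(1) + 2·∫₁^r Ω̇(r') dr' + ((r−1)/2)·(a(1) − 4·Ω̇(1)). -/

import Mathlib

open Set MeasureTheory intervalIntegral

/-- (Representation formula for the linearized conformal factor,
eq. (3.2).) Let `I ⊆ (0,∞)` be an interval and let `φ̇, Ω̇, a : ℝ → ℝ` satisfy on `I`
the linearized first variation equation `φ̇'(r) = (r/2)·a(r) + φ̇(r)/r` and the
linearized Raychaudhuri equation `a'(r) + (2/r)·a(r) = (4/r)·Ω̇'(r)`. If `[1,r] ⊆ I`,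
then `φ̇(r) = r·φ̇(1) + 2·∫₁^r Ω̇(r') dr' + ((r-1)/2)·(a(1) - 4·Ω̇(1))`. -/
theorem representation_formula_linearized_conformal_factor
    (I : Set ℝ) (hI : I.OrdConnected) (hIpos : I ⊆ Set.Ioi (0 : ℝ))
    (φdot Ωdot a Ωdot' : ℝ → ℝ)
    (hΩdot : ∀ r ∈ I, HasDerivAt Ωdot (Ωdot' r) r)
    -- linearized first variation equation `φ̇'(r) = (r/2)·a(r) + φ̇(r)/r`
    (hfirstvar : ∀ r ∈ I, HasDerivAt φdot ((r / 2) * a r + φdot r / r) r)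
    -- linearized Raychaudhuri equation `a'(r) + (2/r)·a(r) = (4/r)·Ω̇'(r)`
    (hray : ∀ r ∈ I, HasDerivAt a ((4 / r) * Ωdot' r - (2 / r) * a r) r)
    (r : ℝ) (hr : 1 ≤ r) (hIcc : Set.Icc (1 : ℝ) r ⊆ I) :
    φdot r = r * φdot 1 + 2 * (∫ r' in (1 : ℝ)..r, Ωdot r')
      + ((r - 1) / 2) * (a 1 - 4 * Ωdot 1) := by
  have h1I : (1:ℝ) ∈ I := hIcc ⟨le_refl 1, hr⟩
  set W : ℝ → ℝ := fun s => ∫ t in (1:ℝ)..s, Ωdot t with hWdef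
  set c : ℝ := a 1 - 4 * Ωdot 1 with hc
  have contΩ : ContinuousOn Ωdot I := fun x hx => (hΩdot x hx).continuousAt.continuousWithinAt
  have conta : ContinuousOn a I := fun x hx => (hray x hx).continuousAt.continuousWithinAt
  have contφ : ContinuousOn φdot I := fun x hx => (hfirstvar x hx).continuousAt.continuousWithinAt
  have intΩ : ∀ s ∈ Set.Icc (1:ℝ) r, IntervalIntegrable Ωdot volume 1 s := by
    intro s hs
    apply ContinuousOn.intervalIntegrable
    apply contΩ.mono
    rw [Set.uIcc_of_le hs.1]
    exact (Set.Icc_subset_Icc le_rfl hs.2).trans hIcc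
  have contW : ContinuousOn W (Set.Icc 1 r) := by
    have : IntegrableOn Ωdot (Set.uIcc (1:ℝ) r) volume := by
      rw [Set.uIcc_of_le hr]
      exact (contΩ.mono hIcc).integrableOn_Icc
    simpa [Set.uIcc_of_le hr] using intervalIntegral.continuousOn_primitive_interval this
  -- derivative of W at interior points
  have hWd : ∀ x ∈ Set.Ioo (1:ℝ) r, HasDerivAt W (Ωdot x) x := by
    intro x hx
    have hsub : Set.Ioo (1:ℝ) r ⊆ I := Set.Ioo_subset_Icc_self.trans hIcc
    have hmeas := ContinuousAt.stronglyMeasurableAtFilter (μ := volume) isOpen_Ioo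
      (fun y hy => (hΩdot y (hsub hy)).continuousAt) x hx
    exact intervalIntegral.integral_hasDerivAt_right
      (intΩ x (Set.Ioo_subset_Icc_self hx)) hmeas (hΩdot x (hsub hx)).continuousAt
  -- generic FTC helper: a function with zero derivative on the interior is constant
  have FTC : ∀ (f : ℝ → ℝ) (s : ℝ), 1 ≤ s → s ≤ r → ContinuousOn f (Set.Icc 1 s) →
      (∀ x ∈ Set.Ioo (1:ℝ) s, HasDerivAt f 0 x) → f s = f 1 := by
    intro f s h1s hsr hcont hderiv
    have h0 := intervalIntegral.integral_eq_sub_of_hasDeriv_right_of_le h1s hcont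
      (f' := fun _ => (0:ℝ)) (fun x hx => (hderiv x hx).hasDerivWithinAt)
      intervalIntegrable_const
    simp at h0
    linarith
  have W1 : W 1 = 0 := intervalIntegral.integral_same
  -- Step 1: conserved quantity from Raychaudhuri
  have key : ∀ s ∈ Set.Icc (1:ℝ) r, s^2 * a s - 4*s*Ωdot s + 4 * W s = c := by
    intro s hs
    have hsubI : Set.Icc (1:ℝ) s ⊆ I := (Set.Icc_subset_Icc le_rfl hs.2).trans hIcc
    have hcont : ContinuousOn (fun x => x^2 * a x - 4*x*Ωdot x + 4 * W x) (Set.Icc 1 s) := by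
      apply ContinuousOn.add
      apply ContinuousOn.sub
      · exact (continuousOn_pow 2).mul (conta.mono hsubI)
      · exact (continuousOn_const.mul continuousOn_id).mul (contΩ.mono hsubI)
      · exact continuousOn_const.mul (contW.mono (Set.Icc_subset_Icc le_rfl hs.2))
    have hderiv : ∀ x ∈ Set.Ioo (1:ℝ) s, HasDerivAt (fun x => x^2 * a x - 4*x*Ωdot x + 4 * W x) 0 x := by
      intro x hx
      have hx' : x ∈ Set.Ioo (1:ℝ) r := ⟨hx.1, lt_of_lt_of_le hx.2 hs.2⟩
      have hxI : x ∈ I := hIcc ⟨hx'.1.le, hx'.2.le⟩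
      have hx0 : x ≠ 0 := by nlinarith [hx.1]
      have hd : HasDerivAt (fun x => x^2 * a x - 4*x*Ωdot x + 4 * W x)
          ((2 * x^1 * a x + x^2 * ((4 / x) * Ωdot' x - (2 / x) * a x))
            - ((0 * x + 4 * 1) * Ωdot x + 4*x * Ωdot' x) + 4 * Ωdot x) x := by
        refine HasDerivAt.add (HasDerivAt.sub ?_ ?_) ?_
        · have := (hasDerivAt_pow 2 x).mul (hray x hxI)
          exact this.congr_deriv (by norm_num)
        · exact (((hasDerivAt_const x (4:ℝ)).mul (hasDerivAt_id x)).mul (hΩdot x hxI))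
        · exact (hWd x hx').const_mul 4
      convert hd using 1
      field_simp
      ring
    have := FTC _ s hs.1 hs.2 hcont hderiv
    rw [this]
    simp [W1, hc]
  -- Step 2: primitive identity
  set Φ : ℝ → ℝ := fun x => φdot x / x - 2 * W x / x + c / (2*x) with hΦ
  have hne : ∀ x ∈ Set.Icc (1:ℝ) r, x ≠ 0 := fun x hx => by
    have := hx.1; intro h; rw [h] at this; linarith
  have contΦ : ContinuousOn Φ (Set.Icc 1 r) := by
    apply ContinuousOn.add
    apply ContinuousOn.sub
    · exact ((contφ.mono hIcc).div continuousOn_id hne)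
    · exact ((continuousOn_const.mul contW).div continuousOn_id hne)
    · exact continuousOn_const.div (continuousOn_const.mul continuousOn_id)
        (fun x hx => by simpa using hne x hx)
  have hΦd : ∀ x ∈ Set.Ioo (1:ℝ) r, HasDerivAt Φ 0 x := by
    intro x hx
    have hxI : x ∈ I := hIcc ⟨hx.1.le, hx.2.le⟩
    have hx0 : x ≠ 0 := by nlinarith [hx.1]
    have hax : x^2 * a x = c + 4*x*Ωdot x - 4 * W x := by
      have := key x ⟨hx.1.le, hx.2.le⟩; linarith
    have hd : HasDerivAt Φ
        ((((x / 2) * a x + φdot x / x) * x - φdot x * 1) / x^2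
          - ((0 * W x + 2 * Ωdot x) * x - 2 * W x * 1) / x^2
          + (0 * (2*x) - c * (0 * x + 2 * 1)) / (2*x)^2) x := by
      refine HasDerivAt.add (HasDerivAt.sub ?_ ?_) ?_
      · exact (hfirstvar x hxI).div (hasDerivAt_id x) hx0
      · exact (((hasDerivAt_const x (2:ℝ)).mul (hWd x hx))).div (hasDerivAt_id x) hx0
      · exact (hasDerivAt_const x c).div ((hasDerivAt_const x (2:ℝ)).mul (hasDerivAt_id x))
          (by simpa using hx0)
    convert hd using 1
    field_simp
    linear_combination (-2) * hax
  have hfin := FTC Φ r hr le_rfl contΦ hΦd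
  rw [hΦ] at hfin
  simp only [W1] at hfin
  have hr0 : r ≠ 0 := hne r ⟨hr, le_rfl⟩
  have : φdot r / r - 2 * W r / r + c / (2*r) = φdot 1 + c / 2 := by
    rw [hfin]; ring
  field_simp at this
  show φdot r = r * φdot 1 + 2 * W r + ((r - 1) / 2) * c
  have h4 : (4*r) * φdot r = (4*r) * (r * φdot 1 + 2 * W r + ((r - 1) / 2) * c) := by
    linear_combination (2*r) * this
  have hr4 : (4*r : ℝ) ≠ 0 := by positivity
  exact mul_left_cancel₀ hr4 h4
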